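/- For a finite deterministic Markov decision process, the value-iteration stopping criterion gives a suboptimality bound: if V : S → ℝ and θ ≥ 0 satisfy max_{x ∈ S} |(T V)(x) − V(x)| ≤ θ, then max_{x ∈ S} |(T V)(x) − v_*(x)| ≤ λ θ / (1 − λ). -/

import Mathlib

/-- Closed-loop trajectory under a stationary policy. -/
def ctraj {S A : Type*} (f : S → A → S) (pol : S → A) (x : S) : ℕ → S
  | 0 => x
  | t + 1 => f (ctraj f pol x t) (pol (ctraj f pol x t))

/-- Value function of a stationary policy. -/
noncomputable def vpi {S A : Type*} (f : S → A → S) (g : S → A → ℝ) (lam : ℝ)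
    (pol : S → A) (x : S) : ℝ :=
  ∑' t : ℕ, lam ^ t * g (ctraj f pol x t) (pol (ctraj f pol x t))

/-- Optimal value function: minimum over stationary policies. -/
noncomputable def vstar {S A : Type*} (f : S → A → S) (g : S → A → ℝ) (lam : ℝ)
    (x : S) : ℝ :=
  ⨅ pol : S → A, vpi f g lam pol x


/-- Bellman operator. -/
noncomputable def bellman {S A : Type*} (f : S → A → S) (g : S → A → ℝ) (lam : ℝ)
    (V : S → ℝ) (x : S) : ℝ :=
  ⨅ u : A, (g x u + lam * V (f x u))

set_option linter.unusedSectionVars false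

section Aux

variable {S A : Type*} [Fintype S] [Nonempty S] [Fintype A] [Nonempty A]
variable (f : S → A → S) (g : S → A → ℝ) (lam : ℝ)

/-- policy evaluation operator -/
noncomputable def Tpol (pol : S → A) (V : S → ℝ) (x : S) : ℝ :=
  g x (pol x) + lam * V (f x (pol x))

lemma ctraj_shift (pol : S → A) (x : S) (t : ℕ) :
    ctraj f pol x (t + 1) = ctraj f pol (f x (pol x)) t := by
  induction t with
  | zero => rfl
  | succ n ih =>
    rw [show ctraj f pol x (n + 1 + 1) =
        f (ctraj f pol x (n + 1)) (pol (ctraj f pol x (n + 1))) from rfl, ih]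
    rfl

lemma summable_vpi (hlam0 : 0 < lam) (hlam1 : lam < 1) (pol : S → A) (x : S) :
    Summable (fun t : ℕ => lam ^ t * g (ctraj f pol x t) (pol (ctraj f pol x t))) := by
  obtain ⟨C, hC⟩ := Finite.exists_le (fun p : S × A => |g p.1 p.2|)
  apply Summable.of_norm_bounded
    (((summable_geometric_of_lt_one hlam0.le hlam1)).mul_right C)
  intro t
  rw [Real.norm_eq_abs, abs_mul, abs_pow, abs_of_pos hlam0]
  exact mul_le_mul_of_nonneg_left (hC (_, _)) (by positivity)

lemma vpi_rec (hlam0 : 0 < lam) (hlam1 : lam < 1) (pol : S → A) (x : S) :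
    vpi f g lam pol x = Tpol f g lam pol (vpi f g lam pol) x := by
  unfold vpi Tpol
  rw [Summable.tsum_eq_zero_add (summable_vpi f g lam hlam0 hlam1 pol x)]
  have h0 : ctraj f pol x 0 = x := rfl
  rw [h0, pow_zero, one_mul]
  congr 1
  rw [← tsum_mul_left]
  congr 1
  ext t
  rw [ctraj_shift]
  ring

/-- inf comparison -/
lemma ciInf_le_ciInf_add {p q : A → ℝ} {c : ℝ} (h : ∀ u, p u ≤ q u + c) :
    (⨅ u, p u) ≤ (⨅ u, q u) + c := by
  obtain ⟨u0, hu0⟩ := Finite.exists_min q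
  have hq : (⨅ u, q u) = q u0 :=
    le_antisymm (ciInf_le (Finite.bddBelow_range q) u0) (le_ciInf hu0)
  rw [hq]
  exact le_trans (ciInf_le (Finite.bddBelow_range p) u0) (h u0)

lemma bellman_abs_le (V W : S → ℝ) (M : ℝ) (hlam0 : 0 < lam)
    (hM : ∀ y, |V y - W y| ≤ M) (x : S) :
    |bellman f g lam V x - bellman f g lam W x| ≤ lam * M := by
  rw [abs_sub_le_iff]
  constructor <;>
  · rw [sub_le_iff_le_add, add_comm, bellman, bellman]
    apply ciInf_le_ciInf_add
    intro u
    have := hM (f x u)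
    rw [abs_sub_le_iff] at this
    nlinarith [this.1, this.2]

lemma Tpol_abs_le (pol : S → A) (V W : S → ℝ) (M : ℝ) (hlam0 : 0 < lam)
    (hM : ∀ y, |V y - W y| ≤ M) (x : S) :
    |Tpol f g lam pol V x - Tpol f g lam pol W x| ≤ lam * M := by
  unfold Tpol
  have : g x (pol x) + lam * V (f x (pol x)) - (g x (pol x) + lam * W (f x (pol x)))
      = lam * (V (f x (pol x)) - W (f x (pol x))) := by ring
  rw [this, abs_mul, abs_of_pos hlam0]
  exact mul_le_mul_of_nonneg_left (hM _) hlam0.le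

lemma contracting_bellman (hlam0 : 0 < lam) (hlam1 : lam < 1) :
    ContractingWith lam.toNNReal (bellman f g lam) := by
  constructor
  · exact_mod_cast (by simpa [Real.coe_toNNReal _ hlam0.le] :
      (lam.toNNReal : ℝ) < 1)
  · apply LipschitzWith.of_dist_le_mul
    intro V W
    rw [Real.coe_toNNReal _ hlam0.le,
      dist_pi_le_iff (by positivity : (0:ℝ) ≤ lam * dist V W)]
    intro x
    rw [Real.dist_eq]
    exact bellman_abs_le f g lam V W _ hlam0
      (fun y => by rw [← Real.dist_eq]; exact dist_le_pi_dist V W y) x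

lemma contracting_Tpol (hlam0 : 0 < lam) (hlam1 : lam < 1) (pol : S → A) :
    ContractingWith lam.toNNReal (Tpol f g lam pol) := by
  constructor
  · exact_mod_cast (by simpa [Real.coe_toNNReal _ hlam0.le] :
      (lam.toNNReal : ℝ) < 1)
  · apply LipschitzWith.of_dist_le_mul
    intro V W
    rw [Real.coe_toNNReal _ hlam0.le,
      dist_pi_le_iff (by positivity : (0:ℝ) ≤ lam * dist V W)]
    intro x
    rw [Real.dist_eq]
    exact Tpol_abs_le f g lam pol V W _ hlam0
      (fun y => by rw [← Real.dist_eq]; exact dist_le_pi_dist V W y) x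

lemma vstar_eq_fixedPoint (hlam0 : 0 < lam) (hlam1 : lam < 1) (x : S) :
    vstar f g lam x =
      ContractingWith.fixedPoint (bellman f g lam)
        (contracting_bellman f g lam hlam0 hlam1) x := by
  classical
  set hc := contracting_bellman f g lam hlam0 hlam1
  set w := ContractingWith.fixedPoint (bellman f g lam) hc with hwdef
  have hw : bellman f g lam w = w := hc.fixedPoint_isFixedPt
  -- w ≤ vpi pol for every policy
  have hle : ∀ pol : S → A, ∀ y, w y ≤ vpi f g lam pol y := by
    intro pol
    have hcp := contracting_Tpol f g lam hlam0 hlam1 pol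
    have hvfix : Function.IsFixedPt (Tpol f g lam pol) (vpi f g lam pol) :=
      funext fun y => (vpi_rec f g lam hlam0 hlam1 pol y).symm
    have hveq : vpi f g lam pol = ContractingWith.fixedPoint (Tpol f g lam pol) hcp :=
      hcp.fixedPoint_unique hvfix
    have hmono : ∀ (P Q : S → ℝ), (∀ y, P y ≤ Q y) →
        ∀ y, Tpol f g lam pol P y ≤ Tpol f g lam pol Q y := by
      intro P Q h y
      unfold Tpol
      have := h (f y (pol y))
      nlinarith
    have hwT : ∀ y, w y ≤ Tpol f g lam pol w y := by
      intro y
      conv_lhs => rw [← hw]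
      exact ciInf_le (Finite.bddBelow_range _) (pol y)
    have hiter : ∀ n y, w y ≤ (Tpol f g lam pol)^[n] w y := by
      intro n
      induction n with
      | zero => intro y; simp
      | succ n ih =>
        intro y
        rw [Function.iterate_succ_apply']
        exact le_trans (hwT y) (hmono _ _ ih y)
    intro y
    have htend : Filter.Tendsto (fun n => (Tpol f g lam pol)^[n] w y)
        Filter.atTop (nhds (vpi f g lam pol y)) := by
      have := hcp.tendsto_iterate_fixedPoint w
      rw [← hveq] at this
      exact tendsto_pi_nhds.mp this y
    exact ge_of_tendsto' htend (fun n => hiter n y)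
  -- greedy policy: vstar ≤ w
  have hge : vstar f g lam x ≤ w x := by
    have hex : ∀ y : S, ∃ u0 : A, ∀ u : A,
        g y u0 + lam * w (f y u0) ≤ g y u + lam * w (f y u) := fun y =>
      Finite.exists_min _
    choose pol hpol using hex
    have hfix : Function.IsFixedPt (Tpol f g lam pol) w := by
      funext y
      have h1 : Tpol f g lam pol w y = bellman f g lam w y := by
        unfold Tpol bellman
        exact le_antisymm (le_ciInf (hpol y)) (ciInf_le (Finite.bddBelow_range _) (pol y))
      rw [h1, hw]
    have hcp := contracting_Tpol f g lam hlam0 hlam1 pol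
    have hvfix : Function.IsFixedPt (Tpol f g lam pol) (vpi f g lam pol) :=
      funext fun y => (vpi_rec f g lam hlam0 hlam1 pol y).symm
    have : w = vpi f g lam pol := by
      rw [hcp.fixedPoint_unique hfix, hcp.fixedPoint_unique hvfix]
    calc vstar f g lam x ≤ vpi f g lam pol x :=
          ciInf_le (Finite.bddBelow_range _) pol
      _ = w x := by rw [this]
  exact le_antisymm hge (le_ciInf fun pol => hle pol x)

end Aux

theorem value_iteration_stopping_criterion
    {S A : Type*} [Fintype S] [Nonempty S] [Fintype A] [Nonempty A]
    (f : S → A → S) (g : S → A → ℝ) (lam : ℝ) (hlam0 : 0 < lam) (hlam1 : lam < 1)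
    (V : S → ℝ) (θ : ℝ) (hθ : 0 ≤ θ)
    (hstop : (⨆ x : S, |bellman f g lam V x - V x|) ≤ θ) :
    (⨆ x : S, |bellman f g lam V x - vstar f g lam x|) ≤ lam * θ / (1 - lam) := by
  classical
  set hc := contracting_bellman f g lam hlam0 hlam1
  set w := ContractingWith.fixedPoint (bellman f g lam) hc with hwdef
  have hw : bellman f g lam w = w := hc.fixedPoint_isFixedPt
  have hvw : ∀ x : S, vstar f g lam x = w x := fun x =>
    vstar_eq_fixedPoint f g lam hlam0 hlam1 x
  simp only [hvw]
  set D := ⨆ x : S, |bellman f g lam V x - w x| with hDdef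
  have hDy : ∀ y : S, |bellman f g lam V y - w y| ≤ D := by
    intro y
    rw [hDdef]
    exact le_ciSup (Finite.bddAbove_range fun x : S => |bellman f g lam V x - w x|) y
  have hθy : ∀ y : S, |bellman f g lam V y - V y| ≤ θ := fun y =>
    le_trans (le_ciSup (Finite.bddAbove_range
      fun x : S => |bellman f g lam V x - V x|) y) hstop
  have hM : ∀ y : S, |V y - w y| ≤ θ + D := by
    intro y
    calc |V y - w y| ≤ |V y - bellman f g lam V y| + |bellman f g lam V y - w y| :=
          abs_sub_le _ _ _
      _ ≤ θ + D := by
          rw [abs_sub_comm]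
          exact add_le_add (hθy y) (hDy y)
  have hpt : ∀ x : S, |bellman f g lam V x - w x| ≤ lam * (θ + D) := by
    intro x
    have : |bellman f g lam V x - w x|
        = |bellman f g lam V x - bellman f g lam w x| := by rw [hw]
    rw [this]
    exact bellman_abs_le f g lam V w (θ + D) hlam0 hM x
  have hD : D ≤ lam * (θ + D) := ciSup_le hpt
  have hD0 : 0 ≤ D := le_trans (abs_nonneg _) (hDy (Classical.arbitrary S))
  rw [le_div_iff₀ (by linarith : (0:ℝ) < 1 - lam)]
  nlinarith
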